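/- In the Stalemate-revisited causal Kripke setting, the conjunction (p1,w1) = 1 ∧ (p2,w1) = 1 is an actual cause of r = 1 at world w0 by the MODIFIED HP definition, whereas neither (p1,w1) = 1 alone nor (p2,w1) = 1 alone is an actual cause of r = 1 at w0 by the modified definition. -/

import Mathlib

open Classical

noncomputable section

/-- A causal Kripke model `K = (S, W, Rel, F)`: the signature `S` consists of the disjoint
finite sets `Exo` of exogenous and `Endo` of endogenous variables together with a finite
nonempty range `range Γ w` of possible values for each variable `Γ` at each world `w`;
`World` is a finite set of possible worlds, `Rel` is the accessibility relation, and `eqs`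
assigns to each endogenous variable `X` and world `w` a structural equation computing the
value of `(X,w)` from the values of all the other variables (it does not depend on the
coordinate `(X,w)` itself, and its value lies in the range of `(X,w)`). -/
structure CKM where
  Exo : Type
  Endo : Type
  World : Type
  Val : Type
  exoFin : Fintype Exo
  endoFin : Fintype Endo
  worldFin : Fintype World
  Rel : World → World → Prop
  range : (Exo ⊕ Endo) → World → Finset Val
  range_nonempty : ∀ Γ w, (range Γ w).Nonempty
  eqs : Endo → World → (((Exo ⊕ Endo) × World) → Val) → Val
  eqs_mem : ∀ X w g, eqs X w g ∈ range (Sum.inr X) w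
  eqs_indep : ∀ X w g g',
    (∀ p, p ≠ (Sum.inr X, w) → g p = g' p) → eqs X w g = eqs X w g'

namespace CKM

/-- A context assigns to every exogenous variable at every world a value in its range. -/
def ValidContext (K : CKM) (t : K.Exo → K.World → K.Val) : Prop :=
  ∀ U w, t U w ∈ K.range (Sum.inl U) w

/-- `v` is a solution of the causal Kripke setting `(K, t)`: it agrees with the context `t`
on all exogenous variables and satisfies all structural equations. -/
def Solves (K : CKM) (t : K.Exo → K.World → K.Val)
    (v : ((K.Exo ⊕ K.Endo) × K.World) → K.Val) : Prop :=
  (∀ U w, v (Sum.inl U, w) = t U w) ∧ ∀ X w, v (Sum.inr X, w) = K.eqs X w v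

/-- The variable `p` influences the (endogenous) variable `q` (i.e. `q` directly causally
depends on `p`): some change in the value of `p`, keeping all other variables fixed
(within their ranges), changes the value of the structural equation of `q`. -/
def Influences (K : CKM) (p q : (K.Exo ⊕ K.Endo) × K.World) : Prop :=
  ∃ X w, q = (Sum.inr X, w) ∧
    ∃ g g', (∀ r, g r ∈ K.range r.1 r.2) ∧ (∀ r, g' r ∈ K.range r.1 r.2) ∧
      (∀ r, r ≠ p → g r = g' r) ∧ K.eqs X w g ≠ K.eqs X w g'

/-- A causal Kripke model is recursive if it contains no cyclic dependencies. -/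
def Recursive (K : CKM) : Prop :=
  ∀ p, ¬ Relation.TransGen K.Influences p p

/-- The causal Kripke model obtained from `K` by the intervention setting the variables in
`dom` to the values prescribed by `val`. -/
def doInt (K : CKM) (dom : Finset (K.Endo × K.World)) (val : K.Endo × K.World → K.Val) :
    CKM :=
  { K with
    eqs := fun X w g =>
      if (X, w) ∈ dom ∧ val (X, w) ∈ K.range (Sum.inr X) w then val (X, w)
      else K.eqs X w g
    eqs_mem := by
      intro X w g
      by_cases h : (X, w) ∈ dom ∧ val (X, w) ∈ K.range (Sum.inr X) w
      · simp only [if_pos h]; exact h.2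
      · simp only [if_neg h]; exact K.eqs_mem X w g
    eqs_indep := by
      intro X w g g' hgg'
      by_cases h : (X, w) ∈ dom ∧ val (X, w) ∈ K.range (Sum.inr X) w
      · simp only [if_pos h]
      · simp only [if_neg h]; exact K.eqs_indep X w g g' hgg' }

end CKM

/-- Events (modal-Boolean combinations of primitive events): primitive events `X = x` and
`(X,w) = x`, negation, conjunction and the modal operator `□`. -/
inductive Event (E W V : Type) : Type
  | eq : E → V → Event E W V
  | eqAt : E → W → V → Event E W V
  | neg : Event E W V → Event E W V
  | conj : Event E W V → Event E W V → Event E W V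
  | box : Event E W V → Event E W V

namespace CKM

/-- Satisfaction of an event at a world of `K`, relative to a solution `v` of the setting. -/
def SatE (K : CKM) (v : ((K.Exo ⊕ K.Endo) × K.World) → K.Val) :
    K.World → Event K.Endo K.World K.Val → Prop
  | w, .eq X x => v (Sum.inr X, w) = x
  | _, .eqAt X w' x => v (Sum.inr X, w') = x
  | w, .neg α => ¬ SatE K v w α
  | w, .conj α β => SatE K v w α ∧ SatE K v w β
  | w, .box α => ∀ w', K.Rel w w' → SatE K v w' α

/-- `(K,t,w) ⊩ [dom ← val] α` : the event `α` holds at `w` in the model obtained from the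
intervention `dom ← val`, in the context `t`. -/
def SatI (K : CKM) (t : K.Exo → K.World → K.Val) (dom : Finset (K.Endo × K.World))
    (val : K.Endo × K.World → K.Val) (w : K.World) (α : Event K.Endo K.World K.Val) :
    Prop :=
  ∀ v, (K.doInt dom val).Solves t v → (K.doInt dom val).SatE v w α

/-- AC1 : `α` actually holds at `w`, and each conjunct `(X_i, w_j) = y_ij` of `Y = y`
actually holds. -/
def AC1 (K : CKM) (t : K.Exo → K.World → K.Val) (w : K.World)
    (Y : Finset (K.Endo × K.World)) (y : K.Endo × K.World → K.Val)
    (α : Event K.Endo K.World K.Val) : Prop :=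
  ∀ v, K.Solves t v → K.SatE v w α ∧ ∀ p ∈ Y, v (Sum.inr p.1, p.2) = y p

/-- AC2a together with AC2bᵒ (they share the partition `Z`, `N` and the setting `n`):
there is a partition of the endogenous variables into `Z ⊇ Y` and `N` and settings `y'`
of `Y` and `n` of `N` such that `(K,t,w) ⊩ [Y ← y', N ← n] ¬α`, and, where `z*` are the
actual values of the variables of `Z`, for every subset `Z'` of `Z \ Y`,
`(K,t,w) ⊩ [Y ← y, N ← n, Z' ← z'*] α`. -/
def AC2o (K : CKM) (t : K.Exo → K.World → K.Val) (w : K.World)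
    (Y : Finset (K.Endo × K.World)) (y : K.Endo × K.World → K.Val)
    (α : Event K.Endo K.World K.Val) : Prop :=
  ∃ Z N : Finset (K.Endo × K.World), ∃ y' n : K.Endo × K.World → K.Val,
    Y ⊆ Z ∧ Disjoint Z N ∧ (∀ p : K.Endo × K.World, p ∈ Z ∨ p ∈ N) ∧
    (∀ p ∈ Y, y' p ∈ K.range (Sum.inr p.1) p.2) ∧
    (∀ p ∈ N, n p ∈ K.range (Sum.inr p.1) p.2) ∧
    K.SatI t (Y ∪ N) (fun p => if p ∈ Y then y' p else n p) w (.neg α) ∧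
    ∀ v, K.Solves t v → ∀ Z' ⊆ Z \ Y,
      K.SatI t (Y ∪ N ∪ Z')
        (fun p => if p ∈ Y then y p else if p ∈ N then n p else v (Sum.inr p.1, p.2)) w α

/-- AC2a together with AC2bᵘ (updated definition): as in `AC2o`, but moreover the
restoration of the actual values `z'*` must keep `α` true for every subset `N'` of `N`. -/
def AC2u (K : CKM) (t : K.Exo → K.World → K.Val) (w : K.World)
    (Y : Finset (K.Endo × K.World)) (y : K.Endo × K.World → K.Val)
    (α : Event K.Endo K.World K.Val) : Prop :=
  ∃ Z N : Finset (K.Endo × K.World), ∃ y' n : K.Endo × K.World → K.Val,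
    Y ⊆ Z ∧ Disjoint Z N ∧ (∀ p : K.Endo × K.World, p ∈ Z ∨ p ∈ N) ∧
    (∀ p ∈ Y, y' p ∈ K.range (Sum.inr p.1) p.2) ∧
    (∀ p ∈ N, n p ∈ K.range (Sum.inr p.1) p.2) ∧
    K.SatI t (Y ∪ N) (fun p => if p ∈ Y then y' p else n p) w (.neg α) ∧
    ∀ v, K.Solves t v → ∀ Z' ⊆ Z \ Y, ∀ N' ⊆ N,
      K.SatI t (Y ∪ N' ∪ Z')
        (fun p => if p ∈ Y then y p else if p ∈ N' then n p else v (Sum.inr p.1, p.2)) w α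

/-- AC2aᵐ (modified definition): there are a set `N` of endogenous variables and a setting
`y'` of the variables in `Y` such that, where `n*` are the actual values of the variables
in `N`, `(K,t,w) ⊩ [Y ← y', N ← n*] ¬α`. -/
def AC2m (K : CKM) (t : K.Exo → K.World → K.Val) (w : K.World)
    (Y : Finset (K.Endo × K.World)) (y : K.Endo × K.World → K.Val)
    (α : Event K.Endo K.World K.Val) : Prop :=
  ∃ N : Finset (K.Endo × K.World), ∃ y' : K.Endo × K.World → K.Val,
    (∀ p ∈ Y, y' p ∈ K.range (Sum.inr p.1) p.2) ∧
    ∀ v, K.Solves t v →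
      K.SatI t (Y ∪ N)
        (fun p => if p ∈ Y then y' p else v (Sum.inr p.1, p.2)) w (.neg α)

/-- `Y = y` is an actual cause of `α` in `(K,t)` at `w` by the ORIGINAL HP definition. -/
def IsCauseO (K : CKM) (t : K.Exo → K.World → K.Val) (w : K.World)
    (Y : Finset (K.Endo × K.World)) (y : K.Endo × K.World → K.Val)
    (α : Event K.Endo K.World K.Val) : Prop :=
  K.AC1 t w Y y α ∧ K.AC2o t w Y y α ∧
    ∀ Y' ⊂ Y, ∀ y'' : K.Endo × K.World → K.Val,
      ¬ (K.AC1 t w Y' y'' α ∧ K.AC2o t w Y' y'' α)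

/-- `Y = y` is an actual cause of `α` in `(K,t)` at `w` by the UPDATED HP definition. -/
def IsCauseU (K : CKM) (t : K.Exo → K.World → K.Val) (w : K.World)
    (Y : Finset (K.Endo × K.World)) (y : K.Endo × K.World → K.Val)
    (α : Event K.Endo K.World K.Val) : Prop :=
  K.AC1 t w Y y α ∧ K.AC2u t w Y y α ∧
    ∀ Y' ⊂ Y, ∀ y'' : K.Endo × K.World → K.Val,
      ¬ (K.AC1 t w Y' y'' α ∧ K.AC2u t w Y' y'' α)

/-- `Y = y` is an actual cause of `α` in `(K,t)` at `w` by the MODIFIED HP definition. -/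
def IsCauseM (K : CKM) (t : K.Exo → K.World → K.Val) (w : K.World)
    (Y : Finset (K.Endo × K.World)) (y : K.Endo × K.World → K.Val)
    (α : Event K.Endo K.World K.Val) : Prop :=
  K.AC1 t w Y y α ∧ K.AC2m t w Y y α ∧
    ∀ Y' ⊂ Y, ∀ y'' : K.Endo × K.World → K.Val,
      ¬ (K.AC1 t w Y' y'' α ∧ K.AC2m t w Y' y'' α)

/-- `(X,w) = x` is part of a cause of `α` in `(K,t)` at `w'` by the original HP
definition: it is a conjunct of some actual cause `Y = y` of `α` at `w'`. -/
def PartOfCauseO (K : CKM) (t : K.Exo → K.World → K.Val) (w' : K.World)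
    (X : K.Endo) (w : K.World) (x : K.Val) (α : Event K.Endo K.World K.Val) : Prop :=
  ∃ Y y, K.IsCauseO t w' Y y α ∧ (X, w) ∈ Y ∧ y (X, w) = x

/-- `(X,w) = x` is part of a cause of `α` in `(K,t)` at `w'` by the updated HP
definition. -/
def PartOfCauseU (K : CKM) (t : K.Exo → K.World → K.Val) (w' : K.World)
    (X : K.Endo) (w : K.World) (x : K.Val) (α : Event K.Endo K.World K.Val) : Prop :=
  ∃ Y y, K.IsCauseU t w' Y y α ∧ (X, w) ∈ Y ∧ y (X, w) = x

/-- `(X,w) = x` is part of a cause of `α` in `(K,t)` at `w'` by the modified HP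
definition. -/
def PartOfCauseM (K : CKM) (t : K.Exo → K.World → K.Val) (w' : K.World)
    (X : K.Endo) (w : K.World) (x : K.Val) (α : Event K.Endo K.World K.Val) : Prop :=
  ∃ Y y, K.IsCauseM t w' Y y α ∧ (X, w) ∈ Y ∧ y (X, w) = x

end CKM

/-- Exogenous variables of the Stalemate-revisited example: `U = (U1, U2, U3)`. -/
inductive SrExo : Type
  | u1 | u2 | u3
deriving DecidableEq

instance instFintypeSrExo : Fintype SrExo where
  elems := {SrExo.u1, SrExo.u2, SrExo.u3}
  complete := by intro x; cases x <;> simp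

/-- Endogenous variables of the Stalemate-revisited example: `p1` = "the king is in check
by the opponent's queen", `p2` = "the king is in check by the opponent's king", `q` = "the
king and the knight are the only pieces that can move", `r` = "the player is forced to
move the knight". -/
inductive SrEndo : Type
  | p1 | p2 | q | r
deriving DecidableEq

instance instFintypeSrEndo : Fintype SrEndo where
  elems := {SrEndo.p1, SrEndo.p2, SrEndo.q, SrEndo.r}
  complete := by intro x; cases x <;> simp

/-- The Stalemate-revisited causal Kripke model: worlds `w0, w1, w2` (as `Fin 3`),
accessibility `Rel = {(w0,w1), (w0,w2)}`, binary variables with `(p1,w) = (U1,w)`,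
`(p2,w) = (U2,w)`, `(q,w) = (U3,w)` and `r = ¬(p1 ∨ p2) ∧ q ∧ □(p1 ∨ p2)`. -/
@[reducible] def stRevisited : CKM where
  Exo := SrExo
  Endo := SrEndo
  World := Fin 3
  Val := Bool
  exoFin := inferInstance
  endoFin := inferInstance
  worldFin := inferInstance
  Rel := fun a b => a = 0 ∧ b ≠ 0
  range := fun _ _ => Finset.univ
  range_nonempty := fun _ _ => ⟨true, Finset.mem_univ _⟩
  eqs := fun X w g =>
    match X with
    | .p1 => g (Sum.inl SrExo.u1, w)
    | .p2 => g (Sum.inl SrExo.u2, w)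
    | .q => g (Sum.inl SrExo.u3, w)
    | .r =>
        if (¬ (g (Sum.inr SrEndo.p1, w) = true ∨ g (Sum.inr SrEndo.p2, w) = true)) ∧
            g (Sum.inr SrEndo.q, w) = true ∧
            ∀ w' : Fin 3, ((w : Fin 3) = 0 ∧ w' ≠ 0) →
              (g (Sum.inr SrEndo.p1, w') = true ∨ g (Sum.inr SrEndo.p2, w') = true)
        then true else false
  eqs_mem := fun _ _ _ => Finset.mem_univ _
  eqs_indep := by
    intro X w g g' h
    cases X with
    | p1 => exact h (Sum.inl SrExo.u1, w) (by simp)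
    | p2 => exact h (Sum.inl SrExo.u2, w) (by simp)
    | q => exact h (Sum.inl SrExo.u3, w) (by simp)
    | r =>
      refine if_congr ?_ rfl rfl
      have hp1 : ∀ w' : Fin 3, g (Sum.inr SrEndo.p1, w') = g' (Sum.inr SrEndo.p1, w') :=
        fun w' => h _ (by simp)
      have hp2 : ∀ w' : Fin 3, g (Sum.inr SrEndo.p2, w') = g' (Sum.inr SrEndo.p2, w') :=
        fun w' => h _ (by simp)
      have hq : g (Sum.inr SrEndo.q, w) = g' (Sum.inr SrEndo.q, w) := h _ (by simp)
      simp only [hp1, hp2, hq]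

/-- The context of the Stalemate-revisited example: `U = (U1,U2,U3)` is set to `(0,0,1)`
at `w0`, `(1,1,1)` at `w1` and `(0,1,0)` at `w2`. -/
def stRevisitedCtx : SrExo → Fin 3 → Bool := fun U w =>
  match U with
  | SrExo.u1 => decide (w = 1)
  | SrExo.u2 => decide (w = 1 ∨ w = 2)
  | SrExo.u3 => decide (w = 0 ∨ w = 1)

/-! ### Auxiliary development: explicit solutions of the (intervened) Stalemate model -/

/-- The exogenous variable driving each non-`r` endogenous variable. -/
def srPvar : SrEndo → SrExo
  | .p1 => .u1
  | .p2 => .u2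
  | .q => .u3
  | .r => .u1  -- dummy, unused

/-- Value of a non-`r` endogenous variable at `w` under intervention `dom ← val`. -/
def srPv (dom : Finset (SrEndo × Fin 3)) (val : SrEndo × Fin 3 → Bool)
    (X : SrEndo) (w : Fin 3) : Bool :=
  if (X, w) ∈ dom then val (X, w) else stRevisitedCtx (srPvar X) w

/-- The value of `r`'s structural equation at `w` under intervention `dom ← val`. -/
def srRval (dom : Finset (SrEndo × Fin 3)) (val : SrEndo × Fin 3 → Bool)
    (w : Fin 3) : Bool :=
  if (¬ (srPv dom val .p1 w = true ∨ srPv dom val .p2 w = true)) ∧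
      srPv dom val .q w = true ∧
      ∀ w' : Fin 3, ((w : Fin 3) = 0 ∧ w' ≠ 0) →
        (srPv dom val .p1 w' = true ∨ srPv dom val .p2 w' = true)
  then true else false

/-- The (unique) solution of the intervened Stalemate setting. -/
def srSol (dom : Finset (SrEndo × Fin 3)) (val : SrEndo × Fin 3 → Bool) :
    ((SrExo ⊕ SrEndo) × Fin 3) → Bool
  | (Sum.inl U, w) => stRevisitedCtx U w
  | (Sum.inr SrEndo.r, w) =>
      if (SrEndo.r, w) ∈ dom then val (SrEndo.r, w) else srRval dom val w
  | (Sum.inr X, w) => srPv dom val X w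

lemma srSol_p1 (dom val) (w : Fin 3) :
    srSol dom val (Sum.inr SrEndo.p1, w) = srPv dom val .p1 w := rfl
lemma srSol_p2 (dom val) (w : Fin 3) :
    srSol dom val (Sum.inr SrEndo.p2, w) = srPv dom val .p2 w := rfl
lemma srSol_q (dom val) (w : Fin 3) :
    srSol dom val (Sum.inr SrEndo.q, w) = srPv dom val .q w := rfl
lemma srSol_r (dom val) (w : Fin 3) :
    srSol dom val (Sum.inr SrEndo.r, w) =
      if (SrEndo.r, w) ∈ dom then val (SrEndo.r, w) else srRval dom val w := rfl

lemma st_eqs_p1 (g) (w : Fin 3) :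
    stRevisited.eqs SrEndo.p1 w g = g (Sum.inl SrExo.u1, w) := rfl
lemma st_eqs_p2 (g) (w : Fin 3) :
    stRevisited.eqs SrEndo.p2 w g = g (Sum.inl SrExo.u2, w) := rfl
lemma st_eqs_q (g) (w : Fin 3) :
    stRevisited.eqs SrEndo.q w g = g (Sum.inl SrExo.u3, w) := rfl

lemma st_eqs_r (g) (w : Fin 3) :
    stRevisited.eqs SrEndo.r w g =
      if (¬ (g (Sum.inr SrEndo.p1, w) = true ∨ g (Sum.inr SrEndo.p2, w) = true)) ∧
          g (Sum.inr SrEndo.q, w) = true ∧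
          ∀ w' : Fin 3, ((w : Fin 3) = 0 ∧ w' ≠ 0) →
            (g (Sum.inr SrEndo.p1, w') = true ∨ g (Sum.inr SrEndo.p2, w') = true)
      then true else false := by
  by_cases h : (¬ (g (Sum.inr SrEndo.p1, w) = true ∨ g (Sum.inr SrEndo.p2, w) = true)) ∧
      g (Sum.inr SrEndo.q, w) = true ∧
      ∀ w' : Fin 3, ((w : Fin 3) = 0 ∧ w' ≠ 0) →
        (g (Sum.inr SrEndo.p1, w') = true ∨ g (Sum.inr SrEndo.p2, w') = true)
  · rw [if_pos h]; exact if_pos h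
  · rw [if_neg h]; exact if_neg h

lemma doInt_eqs (dom : Finset (SrEndo × Fin 3)) (val : SrEndo × Fin 3 → Bool)
    (X : SrEndo) (w : Fin 3) (g) :
    (stRevisited.doInt dom val).eqs X w g =
      if (X, w) ∈ dom then val (X, w) else stRevisited.eqs X w g := by
  by_cases h : (X, w) ∈ dom
  · rw [if_pos h]
    exact if_pos ⟨h, Finset.mem_univ _⟩
  · rw [if_neg h]
    exact if_neg (fun hc => h hc.1)

lemma srRval_eq (dom : Finset (SrEndo × Fin 3)) (val : SrEndo × Fin 3 → Bool)
    (w : Fin 3) : srRval dom val w = stRevisited.eqs SrEndo.r w (srSol dom val) := by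
  rw [st_eqs_r]
  simp only [srSol_p1, srSol_p2, srSol_q]
  unfold srRval
  exact if_congr Iff.rfl rfl rfl

/-- `srSol` solves the intervened setting. -/
lemma srSol_solves (dom : Finset (SrEndo × Fin 3)) (val : SrEndo × Fin 3 → Bool) :
    (stRevisited.doInt dom val).Solves stRevisitedCtx (srSol dom val) := by
  refine ⟨fun U w => rfl, fun X w => ?_⟩
  erw [doInt_eqs]
  cases X with
  | p1 =>
    erw [st_eqs_p1, srSol_p1]
    rfl
  | p2 =>
    erw [st_eqs_p2, srSol_p2]
    rfl
  | q =>
    erw [st_eqs_q, srSol_q]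
    rfl
  | r =>
    erw [srSol_r, srRval_eq]

/-- Any solution of the intervened setting coincides with `srSol`. -/
lemma srSol_unique (dom : Finset (SrEndo × Fin 3)) (val : SrEndo × Fin 3 → Bool)
    (v : ((SrExo ⊕ SrEndo) × Fin 3) → Bool)
    (hv : (stRevisited.doInt dom val).Solves stRevisitedCtx v) :
    ∀ p, v p = srSol dom val p := by
  have hexo : ∀ U w, v (Sum.inl U, w) = stRevisitedCtx U w := hv.1
  have hend : ∀ X w, v (Sum.inr X, w) = (stRevisited.doInt dom val).eqs X w v := hv.2
  have hp1 : ∀ w, v (Sum.inr SrEndo.p1, w) = srPv dom val .p1 w := by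
    intro w
    erw [hend SrEndo.p1 w, doInt_eqs, st_eqs_p1, hexo]
    rfl
  have hp2 : ∀ w, v (Sum.inr SrEndo.p2, w) = srPv dom val .p2 w := by
    intro w
    erw [hend SrEndo.p2 w, doInt_eqs, st_eqs_p2, hexo]
    rfl
  have hq : ∀ w, v (Sum.inr SrEndo.q, w) = srPv dom val .q w := by
    intro w
    erw [hend SrEndo.q w, doInt_eqs, st_eqs_q, hexo]
    rfl
  have hr : ∀ w, v (Sum.inr SrEndo.r, w) = srSol dom val (Sum.inr SrEndo.r, w) := by
    intro w
    erw [hend SrEndo.r w, doInt_eqs, srSol_r]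
    refine if_congr Iff.rfl rfl ?_
    rw [st_eqs_r, srRval_eq, st_eqs_r]
    simp only [srSol_p1, srSol_p2, srSol_q, hp1, hp2, hq]
    exact if_congr Iff.rfl rfl rfl
  rintro ⟨X | X, w⟩
  · exact hexo X w
  · cases X with
    | p1 => exact hp1 w
    | p2 => exact hp2 w
    | q => exact hq w
    | r => exact hr w

/-- The actual solution. -/
def srAsol : ((SrExo ⊕ SrEndo) × Fin 3) → Bool := srSol ∅ (fun _ => true)

lemma srAsol_solves : stRevisited.Solves stRevisitedCtx srAsol := by
  refine ⟨fun U w => rfl, fun X w => ?_⟩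
  have h := (srSol_solves ∅ (fun _ => true)).2 X w
  erw [doInt_eqs, if_neg (Finset.notMem_empty _)] at h
  exact h

lemma srAsol_unique (v : ((SrExo ⊕ SrEndo) × Fin 3) → Bool)
    (hv : stRevisited.Solves stRevisitedCtx v) : ∀ p, v p = srAsol p := by
  apply srSol_unique ∅ (fun _ => true)
  refine ⟨hv.1, fun X w => ?_⟩
  erw [doInt_eqs, if_neg (Finset.notMem_empty _)]
  exact hv.2 X w

lemma srAsol_nr (X : SrEndo) (w : Fin 3) (hX : X ≠ SrEndo.r) :
    srAsol (Sum.inr X, w) = stRevisitedCtx (srPvar X) w := by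
  cases X with
  | p1 =>
    rw [show srAsol (Sum.inr SrEndo.p1, w) = srPv ∅ (fun _ => true) .p1 w from
      srSol_p1 _ _ _]
    unfold srPv; rw [if_neg (Finset.notMem_empty _)]
  | p2 =>
    rw [show srAsol (Sum.inr SrEndo.p2, w) = srPv ∅ (fun _ => true) .p2 w from
      srSol_p2 _ _ _]
    unfold srPv; rw [if_neg (Finset.notMem_empty _)]
  | q =>
    rw [show srAsol (Sum.inr SrEndo.q, w) = srPv ∅ (fun _ => true) .q w from
      srSol_q _ _ _]
    unfold srPv; rw [if_neg (Finset.notMem_empty _)]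
  | r => exact absurd rfl hX

lemma srAsol_r (w : Fin 3) : srAsol (Sum.inr SrEndo.r, w) = decide (w = 0) := by
  rw [show srAsol (Sum.inr SrEndo.r, w) = _ from srSol_r ∅ (fun _ => true) w,
    if_neg (Finset.notMem_empty _)]
  fin_cases w <;> decide

lemma srAsol_vals :
    srAsol (Sum.inr SrEndo.r, 0) = true ∧
    srAsol (Sum.inr SrEndo.p1, 1) = true ∧
    srAsol (Sum.inr SrEndo.p2, 1) = true := by
  refine ⟨by rw [srAsol_r]; decide, ?_, ?_⟩
  · rw [srAsol_nr _ _ (by decide)]; decide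
  · rw [srAsol_nr _ _ (by decide)]; decide

/-- Key lemma: if the intervention values agree with the actual values everywhere on
`dom` except possibly at one of `(p1,w1)`, `(p2,w1)`, then `r` is still `true` at `w0`. -/
lemma srPv_mem (dom : Finset (SrEndo × Fin 3)) (val : SrEndo × Fin 3 → Bool)
    (X : SrEndo) (w : Fin 3) (h : (X, w) ∈ dom) : srPv dom val X w = val (X, w) := by
  unfold srPv; exact if_pos h

lemma srKey (dom : Finset (SrEndo × Fin 3)) (val : SrEndo × Fin 3 → Bool)
    (e : SrEndo × Fin 3) (he : e = (SrEndo.p1, 1) ∨ e = (SrEndo.p2, 1))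
    (h : ∀ p ∈ dom, p ≠ e → val p = srAsol (Sum.inr p.1, p.2)) :
    srSol dom val (Sum.inr SrEndo.r, 0) = true := by
  have hne : ∀ p : SrEndo × Fin 3, p ≠ (SrEndo.p1, 1) → p ≠ (SrEndo.p2, 1) → p ≠ e := by
    rcases he with rfl | rfl <;> intro p h1 h2 <;> assumption
  have hpv : ∀ X w, X ≠ SrEndo.r → (X, w) ≠ e →
      srPv dom val X w = stRevisitedCtx (srPvar X) w := by
    intro X w hXr hXw
    unfold srPv
    by_cases hmem : (X, w) ∈ dom
    · rw [if_pos hmem, h _ hmem hXw]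
      exact srAsol_nr X w hXr
    · rw [if_neg hmem]
  rw [srSol_r]
  by_cases hrd : (SrEndo.r, (0 : Fin 3)) ∈ dom
  · rw [if_pos hrd, h _ hrd (hne _ (by decide) (by decide))]
    exact srAsol_vals.1
  · rw [if_neg hrd]
    unfold srRval
    rw [if_pos]
    refine ⟨?_, ?_, ?_⟩
    · rw [hpv _ _ (by decide) (hne _ (by decide) (by decide)),
        hpv _ _ (by decide) (hne _ (by decide) (by decide))]
      decide
    · rw [hpv _ _ (by decide) (hne _ (by decide) (by decide))]
      decide
    · rintro w' ⟨-, hw'⟩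
      fin_cases w'
      · exact absurd rfl hw'
      · rcases he with rfl | rfl
        · right
          show srPv dom val SrEndo.p2 1 = true
          rw [hpv SrEndo.p2 1 (by decide) (by decide)]
          decide
        · left
          show srPv dom val SrEndo.p1 1 = true
          rw [hpv SrEndo.p1 1 (by decide) (by decide)]
          decide
      · right
        show srPv dom val SrEndo.p2 2 = true
        rw [hpv SrEndo.p2 2 (by decide) (hne _ (by decide) (by decide))]
        decide

/-- In the Stalemate-revisited causal Kripke setting, the conjunction
`(p1,w1) = 1 ∧ (p2,w1) = 1` is an actual cause of `r = 1` at world `w0` by the MODIFIED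
HP definition, whereas neither `(p1,w1) = 1` alone nor `(p2,w1) = 1` alone is an actual
cause of `r = 1` at `w0` by the modified definition. -/
theorem stRevisited_modified_causes :
    stRevisited.IsCauseM stRevisitedCtx 0
      {(SrEndo.p1, (1 : Fin 3)), (SrEndo.p2, (1 : Fin 3))} (fun _ => true)
      (Event.eq SrEndo.r true) ∧
    ¬ stRevisited.IsCauseM stRevisitedCtx 0 {(SrEndo.p1, (1 : Fin 3))} (fun _ => true)
      (Event.eq SrEndo.r true) ∧
    ¬ stRevisited.IsCauseM stRevisitedCtx 0 {(SrEndo.p2, (1 : Fin 3))} (fun _ => true)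
      (Event.eq SrEndo.r true) := by
  refine ⟨⟨?_, ?_, ?_⟩, ?_, ?_⟩
  · -- AC1 for the pair
    intro v hv
    have hu := srAsol_unique v hv
    refine ⟨?_, ?_⟩
    · show v (Sum.inr SrEndo.r, 0) = true
      rw [hu]; exact srAsol_vals.1
    · intro p hp
      rw [Finset.mem_insert, Finset.mem_singleton] at hp
      rcases hp with rfl | rfl
      · rw [hu]; exact srAsol_vals.2.1
      · rw [hu]; exact srAsol_vals.2.2
  · -- AC2m for the pair: N = ∅, y' = false
    refine ⟨∅, fun _ => false, fun p _ => Finset.mem_univ _, ?_⟩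
    intro v hv v' hv'
    intro hcon
    have hcon' : v' (Sum.inr SrEndo.r, (0 : Fin 3)) = true := hcon
    erw [srSol_unique _ _ v' hv' (Sum.inr SrEndo.r, 0), srSol_r,
      if_neg (by simp)] at hcon'
    unfold srRval at hcon'
    rw [if_neg] at hcon'
    · exact Bool.false_ne_true hcon'
    · rintro ⟨-, -, hall⟩
      have h1 := hall 1 ⟨rfl, by decide⟩
      rcases h1 with h1 | h1
      · rw [srPv_mem _ _ _ _ (by simp)] at h1
        beta_reduce at h1
        rw [if_pos (by simp : (SrEndo.p1, (1 : Fin 3)) ∈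
          ({(SrEndo.p1, (1 : Fin 3)), (SrEndo.p2, (1 : Fin 3))} :
            Finset (SrEndo × Fin 3)))] at h1
        exact Bool.false_ne_true h1
      · rw [srPv_mem _ _ _ _ (by simp)] at h1
        beta_reduce at h1
        rw [if_pos (by simp : (SrEndo.p2, (1 : Fin 3)) ∈
          ({(SrEndo.p1, (1 : Fin 3)), (SrEndo.p2, (1 : Fin 3))} :
            Finset (SrEndo × Fin 3)))] at h1
        exact Bool.false_ne_true h1
  · -- AC3 for the pair
    rintro Y' hY' y'' ⟨-, h2⟩
    obtain ⟨N, y', -, hsat⟩ := h2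
    have hmiss : (SrEndo.p1, (1 : Fin 3)) ∉ Y' ∨ (SrEndo.p2, (1 : Fin 3)) ∉ Y' := by
      by_contra hc
      push_neg at hc
      refine hY'.2 (fun p hp => ?_)
      rw [Finset.mem_insert, Finset.mem_singleton] at hp
      rcases hp with rfl | rfl
      exacts [hc.1, hc.2]
    refine hsat srAsol srAsol_solves _ (srSol_solves _ _) ?_
    show srSol _ _ (Sum.inr SrEndo.r, 0) = true
    rcases hmiss with hm | hm
    · refine srKey _ _ (SrEndo.p2, 1) (Or.inr rfl) ?_
      intro p hp hpe
      by_cases hpY : p ∈ Y'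
      · exfalso
        have hp2 := hY'.1 hpY
        rw [Finset.mem_insert, Finset.mem_singleton] at hp2
        rcases hp2 with rfl | rfl
        · exact hm hpY
        · exact hpe rfl
      · beta_reduce
        rw [if_neg hpY]
    · refine srKey _ _ (SrEndo.p1, 1) (Or.inl rfl) ?_
      intro p hp hpe
      by_cases hpY : p ∈ Y'
      · exfalso
        have hp2 := hY'.1 hpY
        rw [Finset.mem_insert, Finset.mem_singleton] at hp2
        rcases hp2 with rfl | rfl
        · exact hpe rfl
        · exact hm hpY
      · beta_reduce
        rw [if_neg hpY]
  · -- p1 alone is not a cause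
    rintro ⟨-, h2, -⟩
    obtain ⟨N, y', -, hsat⟩ := h2
    refine hsat srAsol srAsol_solves _ (srSol_solves _ _) ?_
    show srSol _ _ (Sum.inr SrEndo.r, 0) = true
    refine srKey _ _ (SrEndo.p1, 1) (Or.inl rfl) ?_
    intro p hp hpe
    by_cases hpY : p ∈ ({(SrEndo.p1, (1 : Fin 3))} : Finset (SrEndo × Fin 3))
    · exact absurd (Finset.mem_singleton.1 hpY) hpe
    · beta_reduce
      rw [if_neg hpY]
  · -- p2 alone is not a cause
    rintro ⟨-, h2, -⟩
    obtain ⟨N, y', -, hsat⟩ := h2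
    refine hsat srAsol srAsol_solves _ (srSol_solves _ _) ?_
    show srSol _ _ (Sum.inr SrEndo.r, 0) = true
    refine srKey _ _ (SrEndo.p2, 1) (Or.inr rfl) ?_
    intro p hp hpe
    by_cases hpY : p ∈ ({(SrEndo.p2, (1 : Fin 3))} : Finset (SrEndo × Fin 3))
    · exact absurd (Finset.mem_singleton.1 hpY) hpe
    · beta_reduce
      rw [if_neg hpY]
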